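/- Let G and H be 2-connected α-critical graphs, e = {v₁,v₂} an edge of G, v a vertex of H, and N_H(v) = U₁ ⊔ U₂ any partition of the neighborhood of v into two nonempty disjoint sets. Then the edge-vertex composition c(G,e,H,v) is an α-critical graph. -/

import Mathlib

open SimpleGraph

/-- The stability (independence) number of the subgraph of `G` induced on the
vertex set `S`: the maximum cardinality of a stable (independent) subset of `S`. -/
noncomputable def alphaOn {V : Type*} [Fintype V] (G : SimpleGraph V) (S : Set V) : ℕ :=
  sSup {n | ∃ s : Finset V, ↑s ⊆ S ∧ (∀ u ∈ s, ∀ v ∈ s, ¬ G.Adj u v) ∧ s.card = n}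

/-- The stability (independence) number `α(G)` of `G`. -/
noncomputable def alphaNum {V : Type*} [Fintype V] (G : SimpleGraph V) : ℕ :=
  alphaOn G Set.univ

/-- The edge `{u, v}` of `G` is an α-critical edge: deleting it increases the
stability number by one. -/
def IsCriticalEdge {V : Type*} [Fintype V] (G : SimpleGraph V) (u v : V) : Prop :=
  G.Adj u v ∧ alphaNum (G.deleteEdges {s(u, v)}) = alphaNum G + 1

/-- `G` is an α-critical graph: every edge is α-critical. -/
def IsAlphaCritical {V : Type*} [Fintype V] (G : SimpleGraph V) : Prop :=
  ∀ u v, G.Adj u v → alphaNum (G.deleteEdges {s(u, v)}) = alphaNum G + 1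

/-- `S` induces a maximal induced subgraph of `G` with stability number `α(G) - 1`:
`α(G[S]) = α(G) - 1` and adding any further vertex raises the stability number to `α(G)`. -/
def IsMaxAlphaSub {V : Type*} [Fintype V] (G : SimpleGraph V) (S : Set V) : Prop :=
  alphaOn G S + 1 = alphaNum G ∧ ∀ w ∉ S, alphaOn G (insert w S) = alphaNum G

/-- The 1-join `j(G, G₀, H, H₀)` of `G` and `H`, where `A = V(G₀)` and `B = V(H₀)`:
the disjoint union of `G` and `H` together with all edges between `V(G) ∖ A` and
`V(H) ∖ B`. -/
def oneJoin {α β : Type*} (G : SimpleGraph α) (H : SimpleGraph β)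
    (A : Set α) (B : Set β) : SimpleGraph (α ⊕ β) :=
  SimpleGraph.fromRel (fun x y =>
    (∃ a b, x = Sum.inl a ∧ y = Sum.inl b ∧ G.Adj a b) ∨
    (∃ a b, x = Sum.inr a ∧ y = Sum.inr b ∧ H.Adj a b) ∨
    (∃ a b, x = Sum.inl a ∧ y = Sum.inr b ∧ a ∉ A ∧ b ∉ B))

/-- The edge-vertex composition `c(G, e, H, v)` with `e = {v₁, v₂}` and
`N_H(v) = U₁ ⊔ U₂`: vertex set `V(G) ⊔ (V(H) ∖ {v})`, edge set
`(E(G) ∖ {e}) ∪ E(H - v) ∪ {v₁u : u ∈ U₁} ∪ {v₂u : u ∈ U₂}`. -/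
def evComp {α β : Type*} (G : SimpleGraph α) (v₁ v₂ : α) (H : SimpleGraph β) (v : β)
    (U₁ U₂ : Set β) : SimpleGraph (α ⊕ {b : β // b ≠ v}) :=
  SimpleGraph.fromRel (fun x y =>
    (∃ a b, x = Sum.inl a ∧ y = Sum.inl b ∧ G.Adj a b ∧ s(a, b) ≠ s(v₁, v₂)) ∨
    (∃ a b : {b : β // b ≠ v}, x = Sum.inr a ∧ y = Sum.inr b ∧ H.Adj a b) ∨
    (∃ b : {b : β // b ≠ v}, x = Sum.inl v₁ ∧ y = Sum.inr b ∧ (b : β) ∈ U₁) ∨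
    (∃ b : {b : β // b ≠ v}, x = Sum.inl v₂ ∧ y = Sum.inr b ∧ (b : β) ∈ U₂))

/-- The splitting `s(H, v)` of the vertex `v` of `H`, with `N_H(v) = N₁ ⊔ N₂`.
The new vertices `v′`, `v″`, `u` are represented by `Sum.inr 0`, `Sum.inr 1`,
`Sum.inr 2` respectively. -/
def splitting {β : Type*} (H : SimpleGraph β) (v : β) (N₁ N₂ : Set β) :
    SimpleGraph ({b : β // b ≠ v} ⊕ Fin 3) :=
  SimpleGraph.fromRel (fun x y =>
    (∃ a b : {b : β // b ≠ v}, x = Sum.inl a ∧ y = Sum.inl b ∧ H.Adj a b) ∨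
    (∃ a : {b : β // b ≠ v}, x = Sum.inl a ∧ y = Sum.inr 0 ∧ (a : β) ∈ N₁) ∨
    (∃ a : {b : β // b ≠ v}, x = Sum.inl a ∧ y = Sum.inr 1 ∧ (a : β) ∈ N₂) ∨
    (x = Sum.inr 0 ∧ y = Sum.inr 2) ∨ (x = Sum.inr 1 ∧ y = Sum.inr 2))

/-- The duplication `d(G, v)` of the vertex `v` of `G`: a new vertex `v′`
(represented by `Sum.inr ()`) is added, adjacent exactly to the closed
neighborhood `N_G[v]`. -/
def duplication {α : Type*} (G : SimpleGraph α) (v : α) : SimpleGraph (α ⊕ Unit) :=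
  SimpleGraph.fromRel (fun x y =>
    (∃ a b, x = Sum.inl a ∧ y = Sum.inl b ∧ G.Adj a b) ∨
    (∃ a, x = Sum.inl a ∧ y = Sum.inr () ∧ a ∈ insert v (G.neighborSet v)))

/-- A graph is duplication free iff it contains no pair of adjacent vertices
with equal closed neighborhoods. -/
def DuplicationFree {α : Type*} (G : SimpleGraph α) : Prop :=
  ∀ u v, G.Adj u v → insert u (G.neighborSet u) ≠ insert v (G.neighborSet v)

/-- `G` is 2-connected: it has at least three vertices and the deletion of any
single vertex leaves it connected. -/
def TwoConnected {V : Type*} [Fintype V] (G : SimpleGraph V) : Prop :=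
  3 ≤ Fintype.card V ∧ ∀ x : V, (G.induce {x}ᶜ).Connected

set_option linter.unreachableTactic false
set_option linter.unusedTactic false
set_option linter.unusedSectionVars false

namespace EVC

def Stab {V : Type*} (Γ : SimpleGraph V) (s : Finset V) : Prop :=
  ∀ u ∈ s, ∀ w ∈ s, ¬ Γ.Adj u w

variable {V : Type*} [Fintype V] {Γ : SimpleGraph V}

lemma bdd : BddAbove {n | ∃ s : Finset V, ↑s ⊆ (Set.univ : Set V) ∧
    (∀ u ∈ s, ∀ v ∈ s, ¬ Γ.Adj u v) ∧ s.card = n} := by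
  refine ⟨Fintype.card V, ?_⟩
  rintro n ⟨s, -, -, rfl⟩
  exact (Finset.card_le_univ s).trans_eq Finset.card_univ

lemma card_le_alphaNum {s : Finset V} (h : Stab Γ s) : s.card ≤ alphaNum Γ := by
  unfold alphaNum alphaOn
  exact le_csSup bdd ⟨s, Set.subset_univ _, h, rfl⟩

lemma exists_stab (Γ : SimpleGraph V) : ∃ s : Finset V, Stab Γ s ∧ s.card = alphaNum Γ := by
  have h := Nat.sSup_mem (s := {n | ∃ s : Finset V, ↑s ⊆ (Set.univ : Set V) ∧
      (∀ u ∈ s, ∀ v ∈ s, ¬ Γ.Adj u v) ∧ s.card = n})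
      ⟨0, ∅, by simp, by simp, rfl⟩ bdd
  obtain ⟨s, -, hs, hc⟩ := h
  refine ⟨s, hs, ?_⟩
  unfold alphaNum alphaOn
  exact hc

lemma alphaNum_deleteEdges_le [DecidableEq V] (u w : V) :
    alphaNum (Γ.deleteEdges {s(u, w)}) ≤ alphaNum Γ + 1 := by
  obtain ⟨s, hs, hc⟩ := exists_stab (Γ.deleteEdges {s(u, w)})
  have hst : Stab Γ (s.erase u) := by
    intro a ha b hb hadj
    refine hs a (Finset.mem_of_mem_erase ha) b (Finset.mem_of_mem_erase hb) ?_
    rw [deleteEdges_adj]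
    refine ⟨hadj, ?_⟩
    intro hmem
    rw [Set.mem_singleton_iff, Sym2.eq_iff] at hmem
    rcases hmem with ⟨rfl, rfl⟩ | ⟨rfl, rfl⟩
    · exact Finset.ne_of_mem_erase ha rfl
    · exact Finset.ne_of_mem_erase hb rfl
  have h1 := card_le_alphaNum hst
  have h2 : s.card - 1 ≤ (s.erase u).card := Finset.pred_card_le_card_erase
  omega

/-- From a critical edge, get a maximum stable set of `Γ - uw` containing both `u` and `w`. -/
lemma crit_set {u w : V} (hcrit : alphaNum (Γ.deleteEdges {s(u, w)}) = alphaNum Γ + 1)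
    (huw : Γ.Adj u w) :
    ∃ s : Finset V, (∀ a ∈ s, ∀ b ∈ s, Γ.Adj a b → s(a, b) = s(u, w)) ∧
      u ∈ s ∧ w ∈ s ∧ s.card = alphaNum Γ + 1 := by
  obtain ⟨s, hs, hc⟩ := exists_stab (Γ.deleteEdges {s(u, w)})
  rw [hcrit] at hc
  have key : ∀ a ∈ s, ∀ b ∈ s, Γ.Adj a b → s(a, b) = s(u, w) := by
    intro a ha b hb hadj
    by_contra hne
    exact hs a ha b hb (deleteEdges_adj.2 ⟨hadj, by simpa using hne⟩)
  have hu : u ∈ s := by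
    by_contra hu
    have hst : Stab Γ s := by
      intro a ha b hb hadj
      have h := key a ha b hb hadj
      rw [Sym2.eq_iff] at h
      rcases h with ⟨rfl, rfl⟩ | ⟨rfl, rfl⟩
      · exact hu ha
      · exact hu hb
    have := card_le_alphaNum hst
    omega
  have hw : w ∈ s := by
    by_contra hw
    have hst : Stab Γ s := by
      intro a ha b hb hadj
      have h := key a ha b hb hadj
      rw [Sym2.eq_iff] at h
      rcases h with ⟨rfl, rfl⟩ | ⟨rfl, rfl⟩
      · exact hw hb
      · exact hw ha
    have := card_le_alphaNum hst
    omega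
  exact ⟨s, key, hu, hw, hc⟩

/-- A maximum stable set avoiding `u` and touching `N(u)` only in `w`. -/
lemma stab_avoid [DecidableEq V] {u w : V}
    (hcrit : alphaNum (Γ.deleteEdges {s(u, w)}) = alphaNum Γ + 1) (huw : Γ.Adj u w) :
    ∃ s : Finset V, Stab Γ s ∧ s.card = alphaNum Γ ∧ u ∉ s ∧ w ∈ s ∧
      (∀ t ∈ s, Γ.Adj u t → t = w) := by
  obtain ⟨s, key, hu, hw, hc⟩ := crit_set hcrit huw
  refine ⟨s.erase u, ?_, ?_, Finset.notMem_erase u s, Finset.mem_erase.2 ⟨huw.ne', hw⟩, ?_⟩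
  · intro a ha b hb hadj
    have h := key a (Finset.mem_of_mem_erase ha) b (Finset.mem_of_mem_erase hb) hadj
    rw [Sym2.eq_iff] at h
    rcases h with ⟨rfl, rfl⟩ | ⟨rfl, rfl⟩
    · exact Finset.ne_of_mem_erase ha rfl
    · exact Finset.ne_of_mem_erase hb rfl
  · rw [Finset.card_erase_of_mem hu, hc]; omega
  · intro t ht hadj
    have h := key u hu t (Finset.mem_of_mem_erase ht) hadj
    rw [Sym2.eq_iff] at h
    rcases h with ⟨-, rfl⟩ | ⟨h1, rfl⟩
    · rfl
    · exact absurd h1 huw.ne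

lemma stab_avoid_two [DecidableEq V] (hcrit : IsAlphaCritical Γ) {x₁ x₂ w : V}
    (h12 : Γ.Adj x₁ x₂) (hw : Γ.Adj x₁ w) (hwne : w ≠ x₂) :
    ∃ s : Finset V, Stab Γ s ∧ s.card = alphaNum Γ ∧ x₁ ∉ s ∧ x₂ ∉ s := by
  obtain ⟨s, hst, hc, hx₁, -, hprop⟩ := stab_avoid (hcrit x₁ w hw) hw
  refine ⟨s, hst, hc, hx₁, ?_⟩
  intro hx₂
  exact hwne ((hprop x₂ hx₂ h12).symm)

lemma exists_other_neighbor (h2 : TwoConnected Γ) {x₁ x₂ : V} (hadj : Γ.Adj x₁ x₂) :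
    ∃ w, Γ.Adj x₁ w ∧ w ≠ x₂ := by
  classical
  obtain ⟨hcard, hconn⟩ := h2
  have hy : ∃ y : V, y ≠ x₁ ∧ y ≠ x₂ := by
    have e1 : (Finset.univ.erase x₁).card = Fintype.card V - 1 := by
      rw [Finset.card_erase_of_mem (Finset.mem_univ _), Finset.card_univ]
    have e2 : (Finset.univ.erase x₁).card - 1 ≤ ((Finset.univ.erase x₁).erase x₂).card :=
      Finset.pred_card_le_card_erase
    have : 0 < ((Finset.univ.erase x₁).erase x₂).card := by omega
    obtain ⟨y, hy⟩ := Finset.card_pos.1 this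
    rw [Finset.mem_erase, Finset.mem_erase] at hy
    exact ⟨y, hy.2.1, hy.1⟩
  obtain ⟨y, hy1, hy2⟩ := hy
  have hx₁mem : x₁ ∈ ({x₂}ᶜ : Set V) := by simpa using hadj.ne
  have hymem : y ∈ ({x₂}ᶜ : Set V) := by simpa using hy2
  obtain ⟨p⟩ := (hconn x₂).preconnected ⟨x₁, hx₁mem⟩ ⟨y, hymem⟩
  cases p with
  | nil => exact absurd rfl hy1
  | @cons _ b _ h q =>
      refine ⟨↑b, h, ?_⟩
      have hb : (b : V) ∈ ({x₂}ᶜ : Set V) := b.2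
      simp only [Set.mem_compl_iff, Set.mem_singleton_iff] at hb
      exact hb


variable {α β : Type*} (G : SimpleGraph α) (v₁ v₂ : α) (H : SimpleGraph β) (v : β)
  (U₁ U₂ : Set β)

lemma evComp_adj_ll {a b : α} :
    (evComp G v₁ v₂ H v U₁ U₂).Adj (Sum.inl a) (Sum.inl b) ↔
      G.Adj a b ∧ s(a, b) ≠ s(v₁, v₂) := by
  unfold evComp
  rw [SimpleGraph.fromRel_adj]
  constructor
  · rintro ⟨hne, h | h⟩ <;>
      rcases h with (⟨a', b', h1, h2, h3, h4⟩ | ⟨a', b', h1, h2, h3⟩ |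
        ⟨b', h1, h2, h3⟩ | ⟨b', h1, h2, h3⟩) <;>
      first
        | (cases h1; cases h2; first
            | exact ⟨h3, h4⟩
            | exact ⟨h3.symm, by rwa [Sym2.eq_swap]⟩)
        | (simp at h1; done)
        | (simp at h2; done)
  · rintro ⟨hadj, hne⟩
    exact ⟨by simpa using hadj.ne, Or.inl (Or.inl ⟨a, b, rfl, rfl, hadj, hne⟩)⟩

lemma evComp_adj_rr {a b : {b : β // b ≠ v}} :
    (evComp G v₁ v₂ H v U₁ U₂).Adj (Sum.inr a) (Sum.inr b) ↔ H.Adj ↑a ↑b := by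
  unfold evComp
  rw [SimpleGraph.fromRel_adj]
  constructor
  · rintro ⟨hne, h | h⟩ <;>
      rcases h with (⟨a', b', h1, h2, h3, h4⟩ | ⟨a', b', h1, h2, h3⟩ |
        ⟨b', h1, h2, h3⟩ | ⟨b', h1, h2, h3⟩) <;>
      first
        | (cases h1; cases h2; first | exact h3 | exact h3.symm)
        | (simp at h1; done)
        | (simp at h2; done)
  · intro hadj
    refine ⟨?_, Or.inl (Or.inr (Or.inl ⟨a, b, rfl, rfl, hadj⟩))⟩
    simp only [ne_eq, Sum.inr.injEq]
    exact fun h => hadj.ne (congrArg Subtype.val h)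

lemma evComp_adj_lr {a : α} {t : {b : β // b ≠ v}} :
    (evComp G v₁ v₂ H v U₁ U₂).Adj (Sum.inl a) (Sum.inr t) ↔
      (a = v₁ ∧ (t : β) ∈ U₁) ∨ (a = v₂ ∧ (t : β) ∈ U₂) := by
  unfold evComp
  rw [SimpleGraph.fromRel_adj]
  constructor
  · rintro ⟨hne, h | h⟩ <;>
      rcases h with (⟨a', b', h1, h2, h3, h4⟩ | ⟨a', b', h1, h2, h3⟩ |
        ⟨b', h1, h2, h3⟩ | ⟨b', h1, h2, h3⟩) <;>
      first
        | (cases h1; cases h2; first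
            | exact Or.inl ⟨rfl, h3⟩
            | exact Or.inr ⟨rfl, h3⟩)
        | (simp at h1; done)
        | (simp at h2; done)
  · rintro (⟨rfl, h⟩ | ⟨rfl, h⟩)
    · exact ⟨by simp, Or.inl (Or.inr (Or.inr (Or.inl ⟨t, rfl, rfl, h⟩)))⟩
    · exact ⟨by simp, Or.inl (Or.inr (Or.inr (Or.inr ⟨t, rfl, rfl, h⟩)))⟩

lemma stab_disjSum {γ δ : Type*} {K : SimpleGraph (γ ⊕ δ)} {s : Finset γ} {t : Finset δ}
    (hll : ∀ a ∈ s, ∀ b ∈ s, ¬K.Adj (Sum.inl a) (Sum.inl b))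
    (hlr : ∀ a ∈ s, ∀ b ∈ t, ¬K.Adj (Sum.inl a) (Sum.inr b))
    (hrr : ∀ a ∈ t, ∀ b ∈ t, ¬K.Adj (Sum.inr a) (Sum.inr b)) :
    Stab K (s.disjSum t) := by
  rintro (a | a) ha (b | b) hb hadj
  · exact hll a (Finset.inl_mem_disjSum.1 ha) b (Finset.inl_mem_disjSum.1 hb) hadj
  · exact hlr a (Finset.inl_mem_disjSum.1 ha) b (Finset.inr_mem_disjSum.1 hb) hadj
  · exact hlr b (Finset.inl_mem_disjSum.1 hb) a (Finset.inr_mem_disjSum.1 ha) hadj.symm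
  · exact hrr a (Finset.inr_mem_disjSum.1 ha) b (Finset.inr_mem_disjSum.1 hb) hadj

lemma sym2_map_eq {γ δ : Type*} (f : γ → δ) {a b c d : γ} (h : s(a, b) = s(c, d)) :
    s(f a, f b) = s(f c, f d) := by
  rw [← Sym2.map_pair_eq, ← Sym2.map_pair_eq, h]

lemma card_subtype_ne {β : Type*} [DecidableEq β] {v : β} {T : Finset β} (hvT : v ∉ T) :
    (T.subtype (· ≠ v)).card = T.card := by
  rw [Finset.card_subtype, Finset.filter_true_of_mem]
  intro x hx
  exact fun h => hvT (h ▸ hx)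

section Main

variable {α β : Type*} [Fintype α] [Fintype β] [DecidableEq α] [DecidableEq β]
  (G : SimpleGraph α) (v₁ v₂ : α) (H : SimpleGraph β) (v : β) (U₁ U₂ : Set β)

lemma sym2_inr_eq {a b c d : {b : β // b ≠ v}}
    (h : s((a : β), (b : β)) = s((c : β), (d : β))) :
    (s(Sum.inr a, Sum.inr b) : Sym2 (α ⊕ {b : β // b ≠ v})) = s(Sum.inr c, Sum.inr d) := by
  rcases Sym2.eq_iff.1 h with ⟨h1, h2⟩ | ⟨h1, h2⟩
  · rw [Subtype.ext h1, Subtype.ext h2]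
  · rw [Subtype.ext h1, Subtype.ext h2, Sym2.eq_swap]

lemma alphaW (hG : IsAlphaCritical G) (hH : IsAlphaCritical H) (he : G.Adj v₁ v₂)
    (hU : U₁ ∪ U₂ = H.neighborSet v) (hU₁ : U₁.Nonempty) :
    alphaNum (evComp G v₁ v₂ H v U₁ U₂) = alphaNum G + alphaNum H := by
  have hNadj : ∀ t : β, t ∈ U₁ ∪ U₂ → H.Adj v t :=
    fun t ht => (H.mem_neighborSet v t).1 (hU ▸ ht)
  -- lower bound
  obtain ⟨u₁, hu₁⟩ := hU₁
  have hvu₁ : H.Adj v u₁ := hNadj _ (Or.inl hu₁)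
  obtain ⟨T, hTst, hTc, hvT, hu₁T, hTprop⟩ := stab_avoid (hH v u₁ hvu₁) hvu₁
  have hαH1 : 1 ≤ alphaNum H := by
    have h1 : Stab H {u₁} := by
      intro x hx y hy hadj
      rw [Finset.mem_singleton] at hx hy
      subst hx; subst hy; exact hadj.ne rfl
    simpa using card_le_alphaNum h1
  obtain ⟨S, keyS, h1S, h2S, hcS⟩ := crit_set (hG v₁ v₂ he) he
  set T₀ : Finset β := T.erase u₁ with hT₀def
  have hvT₀ : v ∉ T₀ := fun h => hvT (Finset.mem_of_mem_erase h)
  have hT₀prop : ∀ t ∈ T₀, ¬H.Adj v t := by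
    intro t ht hadj
    exact Finset.ne_of_mem_erase ht (hTprop t (Finset.mem_of_mem_erase ht) hadj)
  have hstW : Stab (evComp G v₁ v₂ H v U₁ U₂) (S.disjSum (T₀.subtype (· ≠ v))) := by
    refine stab_disjSum ?_ ?_ ?_
    · intro x hx y hy hadj
      rw [evComp_adj_ll] at hadj
      exact hadj.2 (keyS x hx y hy hadj.1)
    · intro x hx t ht hadj
      rw [evComp_adj_lr] at hadj
      have htT : (t : β) ∈ T₀ := Finset.mem_subtype.1 ht
      rcases hadj with ⟨rfl, hmem⟩ | ⟨rfl, hmem⟩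
      · exact hT₀prop _ htT (hNadj _ (Or.inl hmem))
      · exact hT₀prop _ htT (hNadj _ (Or.inr hmem))
    · intro x hx y hy hadj
      rw [evComp_adj_rr] at hadj
      exact hTst _ (Finset.mem_of_mem_erase (Finset.mem_subtype.1 hx)) _
        (Finset.mem_of_mem_erase (Finset.mem_subtype.1 hy)) hadj
  have hlow : alphaNum G + alphaNum H ≤ alphaNum (evComp G v₁ v₂ H v U₁ U₂) := by
    have h := card_le_alphaNum hstW
    rw [Finset.card_disjSum, card_subtype_ne hvT₀, hcS, hT₀def,
      Finset.card_erase_of_mem hu₁T, hTc] at h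
    omega
  -- upper bound
  have hup : alphaNum (evComp G v₁ v₂ H v U₁ U₂) ≤ alphaNum G + alphaNum H := by
    obtain ⟨s, hs, hsc⟩ := exists_stab (evComp G v₁ v₂ H v U₁ U₂)
    rw [← hsc]
    have hcard : s.toLeft.card + s.toRight.card = s.card :=
      Finset.card_toLeft_add_card_toRight
    set sg := s.toLeft with hsgdef
    set sh := s.toRight with hshdef
    set shb : Finset β := sh.map (Function.Embedding.subtype _) with hshbdef
    have hmem_shb : ∀ x ∈ shb, ∃ t : {b : β // b ≠ v}, t ∈ sh ∧ (t : β) = x := by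
      intro x hx
      obtain ⟨t, ht, hte⟩ := Finset.mem_map.1 hx
      exact ⟨t, ht, hte⟩
    have hshbst : Stab H shb := by
      intro x hx y hy hadj
      obtain ⟨t, ht, rfl⟩ := hmem_shb x hx
      obtain ⟨t', ht', rfl⟩ := hmem_shb y hy
      exact hs _ (Finset.mem_toRight.1 ht) _ (Finset.mem_toRight.1 ht')
        ((evComp_adj_rr G v₁ v₂ H v U₁ U₂).2 hadj)
    have hshb_card : shb.card = sh.card := Finset.card_map _
    have hv_shb : v ∉ shb := by
      intro h
      obtain ⟨t, -, hte⟩ := hmem_shb v h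
      exact t.2 hte
    by_cases hboth : v₁ ∈ sg ∧ v₂ ∈ sg
    · have h1 : Stab (G.deleteEdges {s(v₁, v₂)}) sg := by
        intro x hx y hy hadj
        rw [deleteEdges_adj, Set.mem_singleton_iff] at hadj
        exact hs _ (Finset.mem_toLeft.1 hx) _ (Finset.mem_toLeft.1 hy)
          ((evComp_adj_ll G v₁ v₂ H v U₁ U₂).2 ⟨hadj.1, hadj.2⟩)
      have hb1 := card_le_alphaNum h1
      rw [hG v₁ v₂ he] at hb1
      have h2 : Stab H (insert v shb) := by
        intro x hx y hy hadj
        have cross : ∀ t : {b : β // b ≠ v}, t ∈ sh → ¬ H.Adj v ↑t := by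
          intro t ht hadj'
          have hmem : (t : β) ∈ U₁ ∪ U₂ := by
            rw [hU]; exact (H.mem_neighborSet _ _).2 hadj'
          rcases hmem with hmem | hmem
          · exact hs _ (Finset.mem_toLeft.1 hboth.1) _ (Finset.mem_toRight.1 ht)
              ((evComp_adj_lr G v₁ v₂ H v U₁ U₂).2 (Or.inl ⟨rfl, hmem⟩))
          · exact hs _ (Finset.mem_toLeft.1 hboth.2) _ (Finset.mem_toRight.1 ht)
              ((evComp_adj_lr G v₁ v₂ H v U₁ U₂).2 (Or.inr ⟨rfl, hmem⟩))
        rcases Finset.mem_insert.1 hx with hxv | hx'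
        · rcases Finset.mem_insert.1 hy with hyv | hy'
          · rw [hxv, hyv] at hadj; exact hadj.ne rfl
          · obtain ⟨t, ht, hte⟩ := hmem_shb y hy'
            rw [hxv, ← hte] at hadj
            exact cross t ht hadj
        · rcases Finset.mem_insert.1 hy with hyv | hy'
          · obtain ⟨t, ht, hte⟩ := hmem_shb x hx'
            rw [hyv, ← hte] at hadj
            exact cross t ht hadj.symm
          · exact hshbst _ hx' _ hy' hadj
      have hb2 := card_le_alphaNum h2
      rw [Finset.card_insert_of_notMem hv_shb, hshb_card] at hb2
      omega
    · have h1 : Stab G sg := by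
        intro x hx y hy hadj
        by_cases he' : s(x, y) = s(v₁, v₂)
        · rcases Sym2.eq_iff.1 he' with ⟨rfl, rfl⟩ | ⟨rfl, rfl⟩
          · exact hboth ⟨hx, hy⟩
          · exact hboth ⟨hy, hx⟩
        · exact hs _ (Finset.mem_toLeft.1 hx) _ (Finset.mem_toLeft.1 hy)
            ((evComp_adj_ll G v₁ v₂ H v U₁ U₂).2 ⟨hadj, he'⟩)
      have hb1 := card_le_alphaNum h1
      have hb2 := card_le_alphaNum hshbst
      rw [hshb_card] at hb2
      omega
  omega

end Main
section Cases

variable {α β : Type*} [Fintype α] [Fintype β] [DecidableEq α] [DecidableEq β]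
  (G : SimpleGraph α) (v₁ v₂ : α) (H : SimpleGraph β) (v : β) (U₁ U₂ : Set β)

/-- Case: deleted edge lies inside `G`. -/
lemma case_ll (hG : IsAlphaCritical G) (hH : IsAlphaCritical H) (he : G.Adj v₁ v₂)
    (hU : U₁ ∪ U₂ = H.neighborSet v) (hdisj : Disjoint U₁ U₂)
    (hU₁ : U₁.Nonempty) (hU₂ : U₂.Nonempty)
    {a b : α} (hab : G.Adj a b) (hne : s(a, b) ≠ s(v₁, v₂)) :
    ∃ sW : Finset (α ⊕ {b : β // b ≠ v}),
      Stab ((evComp G v₁ v₂ H v U₁ U₂).deleteEdges {s(Sum.inl a, Sum.inl b)}) sW ∧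
      sW.card = alphaNum G + alphaNum H + 1 := by
  have hNadj : ∀ t : β, t ∈ U₁ ∪ U₂ → H.Adj v t :=
    fun t ht => (H.mem_neighborSet v t).1 (hU ▸ ht)
  obtain ⟨S, keyS, haS, hbS, hcS⟩ := crit_set (hG a b hab) hab
  have hnboth : v₁ ∉ S ∨ v₂ ∉ S := by
    by_contra hcon
    push_neg at hcon
    exact hne (keyS v₁ hcon.1 v₂ hcon.2 he).symm
  have main : ∀ u₀ : β, H.Adj v u₀ →
      ∀ T : Finset β, Stab H T → T.card = alphaNum H → v ∉ T →
      (∀ t ∈ T, H.Adj v t → t = u₀) →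
      ((v₁ ∉ S ∧ u₀ ∉ U₂) ∨ (v₂ ∉ S ∧ u₀ ∉ U₁)) →
      ∃ sW : Finset (α ⊕ {b : β // b ≠ v}),
        Stab ((evComp G v₁ v₂ H v U₁ U₂).deleteEdges {s(Sum.inl a, Sum.inl b)}) sW ∧
        sW.card = alphaNum G + alphaNum H + 1 := by
    intro u₀ hvu T hTst hTc hvT hTprop hside
    refine ⟨S.disjSum (T.subtype (· ≠ v)), stab_disjSum ?_ ?_ ?_, ?_⟩
    · intro x hx y hy hadj
      rw [deleteEdges_adj, evComp_adj_ll, Set.mem_singleton_iff] at hadj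
      exact hadj.2 (sym2_map_eq Sum.inl (keyS x hx y hy hadj.1.1))
    · intro x hx t ht hadj
      rw [deleteEdges_adj, evComp_adj_lr] at hadj
      have htT : (t : β) ∈ T := Finset.mem_subtype.1 ht
      rcases hadj.1 with ⟨rfl, hmem⟩ | ⟨rfl, hmem⟩ <;>
        rcases hside with ⟨hxS, hu0⟩ | ⟨hxS, hu0⟩
      · exact hxS hx
      · exact hu0 ((hTprop _ htT (hNadj _ (Or.inl hmem))) ▸ hmem)
      · exact hu0 ((hTprop _ htT (hNadj _ (Or.inr hmem))) ▸ hmem)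
      · exact hxS hx
    · intro x hx y hy hadj
      rw [deleteEdges_adj, evComp_adj_rr] at hadj
      exact hTst _ (Finset.mem_subtype.1 hx) _ (Finset.mem_subtype.1 hy) hadj.1
    · rw [Finset.card_disjSum, card_subtype_ne hvT, hcS, hTc]
      omega
  rcases hnboth with h1S | h2S
  · obtain ⟨u₁, hu₁⟩ := hU₁
    have hvu₁ : H.Adj v u₁ := hNadj _ (Or.inl hu₁)
    obtain ⟨T, hTst, hTc, hvT, -, hTprop⟩ := stab_avoid (hH v u₁ hvu₁) hvu₁
    exact main u₁ hvu₁ T hTst hTc hvT hTprop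
      (Or.inl ⟨h1S, Set.disjoint_left.1 hdisj hu₁⟩)
  · obtain ⟨u₂, hu₂⟩ := hU₂
    have hvu₂ : H.Adj v u₂ := hNadj _ (Or.inr hu₂)
    obtain ⟨T, hTst, hTc, hvT, -, hTprop⟩ := stab_avoid (hH v u₂ hvu₂) hvu₂
    exact main u₂ hvu₂ T hTst hTc hvT hTprop
      (Or.inr ⟨h2S, Set.disjoint_right.1 hdisj hu₂⟩)

/-- Case: deleted edge joins `v₁` to `U₁` or `v₂` to `U₂`. -/
lemma case_lr (hG : IsAlphaCritical G) (hH : IsAlphaCritical H) (he : G.Adj v₁ v₂)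
    (hU : U₁ ∪ U₂ = H.neighborSet v) (hdisj : Disjoint U₁ U₂)
    {u : {b : β // b ≠ v}} {w : α}
    (hcase : (w = v₁ ∧ (u : β) ∈ U₁) ∨ (w = v₂ ∧ (u : β) ∈ U₂)) :
    ∃ sW : Finset (α ⊕ {b : β // b ≠ v}),
      Stab ((evComp G v₁ v₂ H v U₁ U₂).deleteEdges {s(Sum.inl w, Sum.inr u)}) sW ∧
      sW.card = alphaNum G + alphaNum H + 1 := by
  have hNadj : ∀ t : β, t ∈ U₁ ∪ U₂ → H.Adj v t :=
    fun t ht => (H.mem_neighborSet v t).1 (hU ▸ ht)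
  have hvu : H.Adj v ↑u := by
    rcases hcase with ⟨-, hm⟩ | ⟨-, hm⟩
    · exact hNadj _ (Or.inl hm)
    · exact hNadj _ (Or.inr hm)
  obtain ⟨S, keyS, h1S, h2S, hcS⟩ := crit_set (hG v₁ v₂ he) he
  obtain ⟨T, hTst, hTc, hvT, huT, hTprop⟩ := stab_avoid (hH v ↑u hvu) hvu
  refine ⟨S.disjSum (T.subtype (· ≠ v)), stab_disjSum ?_ ?_ ?_, ?_⟩
  · intro x hx y hy hadj
    rw [deleteEdges_adj, evComp_adj_ll] at hadj
    exact hadj.1.2 (keyS x hx y hy hadj.1.1)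
  · intro x hx t ht hadj
    rw [deleteEdges_adj, evComp_adj_lr, Set.mem_singleton_iff] at hadj
    have htT : (t : β) ∈ T := Finset.mem_subtype.1 ht
    rcases hadj.1 with ⟨rfl, hmem⟩ | ⟨rfl, hmem⟩ <;>
      rcases hcase with ⟨hw, hu⟩ | ⟨hw, hu⟩
    · have ht' : t = u := Subtype.ext (hTprop _ htT (hNadj _ (Or.inl hmem)))
      exact hadj.2 (by rw [ht', hw])
    · have ht' : (t : β) = ↑u := hTprop _ htT (hNadj _ (Or.inl hmem))
      exact Set.disjoint_left.1 hdisj (ht' ▸ hmem) hu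
    · have ht' : (t : β) = ↑u := hTprop _ htT (hNadj _ (Or.inr hmem))
      exact Set.disjoint_left.1 hdisj hu (ht' ▸ hmem)
    · have ht' : t = u := Subtype.ext (hTprop _ htT (hNadj _ (Or.inr hmem)))
      exact hadj.2 (by rw [ht', hw])
  · intro x hx y hy hadj
    rw [deleteEdges_adj, evComp_adj_rr] at hadj
    exact hTst _ (Finset.mem_subtype.1 hx) _ (Finset.mem_subtype.1 hy) hadj.1
  · rw [Finset.card_disjSum, card_subtype_ne hvT, hcS, hTc]
    omega

/-- Case: deleted edge lies inside `H - v`. -/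
lemma case_rr (hGc : TwoConnected G) (hG : IsAlphaCritical G) (hH : IsAlphaCritical H)
    (he : G.Adj v₁ v₂) (hU : U₁ ∪ U₂ = H.neighborSet v)
    {a b : {b : β // b ≠ v}} (hab : H.Adj ↑a ↑b) :
    ∃ sW : Finset (α ⊕ {b : β // b ≠ v}),
      Stab ((evComp G v₁ v₂ H v U₁ U₂).deleteEdges {s(Sum.inr a, Sum.inr b)}) sW ∧
      sW.card = alphaNum G + alphaNum H + 1 := by
  obtain ⟨T, keyT, haT, hbT, hcT⟩ := crit_set (hH ↑a ↑b hab) hab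
  have hrr : ∀ T' : Finset β, T' ⊆ T →
      ∀ x : {b : β // b ≠ v}, (x : β) ∈ T' → ∀ y : {b : β // b ≠ v}, (y : β) ∈ T' →
      ¬((evComp G v₁ v₂ H v U₁ U₂).deleteEdges {s(Sum.inr a, Sum.inr b)}).Adj
        (Sum.inr x) (Sum.inr y) := by
    intro T' hT' x hx y hy hadj
    rw [deleteEdges_adj, evComp_adj_rr, Set.mem_singleton_iff] at hadj
    exact hadj.2 (sym2_inr_eq (v := v) (α := α) (keyT _ (hT' hx) _ (hT' hy) hadj.1))
  by_cases hvT : v ∈ T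
  · obtain ⟨S, keyS, h1S, h2S, hcS⟩ := crit_set (hG v₁ v₂ he) he
    have hvT₀ : v ∉ T.erase v := Finset.notMem_erase v T
    refine ⟨S.disjSum ((T.erase v).subtype (· ≠ v)), stab_disjSum ?_ ?_ ?_, ?_⟩
    · intro x hx y hy hadj
      rw [deleteEdges_adj, evComp_adj_ll] at hadj
      exact hadj.1.2 (keyS x hx y hy hadj.1.1)
    · intro x hx t ht hadj
      rw [deleteEdges_adj, evComp_adj_lr] at hadj
      have htT : (t : β) ∈ T := Finset.mem_of_mem_erase (Finset.mem_subtype.1 ht)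
      have hvadj : H.Adj v ↑t := by
        rcases hadj.1 with ⟨-, hmem⟩ | ⟨-, hmem⟩
        · exact (H.mem_neighborSet v ↑t).1 (hU ▸ Or.inl hmem)
        · exact (H.mem_neighborSet v ↑t).1 (hU ▸ Or.inr hmem)
      have := keyT v hvT ↑t htT hvadj
      rcases Sym2.eq_iff.1 this with ⟨h1, -⟩ | ⟨h1, -⟩
      · exact a.2 h1.symm
      · exact b.2 h1.symm
    · intro x hx y hy hadj
      exact hrr (T.erase v) (Finset.erase_subset v T) x (Finset.mem_subtype.1 hx)
        y (Finset.mem_subtype.1 hy) hadj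
    · rw [Finset.card_disjSum, card_subtype_ne hvT₀, hcS,
        Finset.card_erase_of_mem hvT, hcT]
      omega
  · -- v ∉ T
    have main : ∀ S : Finset α, Stab G S → S.card = alphaNum G →
        ((∀ t ∈ T, t ∉ U₁) ∨ v₁ ∉ S) → ((∀ t ∈ T, t ∉ U₂) ∨ v₂ ∉ S) →
        ∃ sW : Finset (α ⊕ {b : β // b ≠ v}),
          Stab ((evComp G v₁ v₂ H v U₁ U₂).deleteEdges {s(Sum.inr a, Sum.inr b)}) sW ∧
          sW.card = alphaNum G + alphaNum H + 1 := by
      intro S hSst hSc hside1 hside2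
      refine ⟨S.disjSum (T.subtype (· ≠ v)), stab_disjSum ?_ ?_ ?_, ?_⟩
      · intro x hx y hy hadj
        rw [deleteEdges_adj, evComp_adj_ll] at hadj
        exact hSst x hx y hy hadj.1.1
      · intro x hx t ht hadj
        rw [deleteEdges_adj, evComp_adj_lr] at hadj
        have htT : (t : β) ∈ T := Finset.mem_subtype.1 ht
        rcases hadj.1 with ⟨rfl, hmem⟩ | ⟨rfl, hmem⟩
        · rcases hside1 with hs1 | hs1
          · exact hs1 _ htT hmem
          · exact hs1 hx
        · rcases hside2 with hs2 | hs2
          · exact hs2 _ htT hmem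
          · exact hs2 hx
      · intro x hx y hy hadj
        exact hrr T (subset_refl T) x (Finset.mem_subtype.1 hx)
          y (Finset.mem_subtype.1 hy) hadj
      · rw [Finset.card_disjSum, card_subtype_ne hvT, hSc, hcT]
        omega
    by_cases hT1 : ∃ t ∈ T, t ∈ U₁
    · by_cases hT2 : ∃ t ∈ T, t ∈ U₂
      · obtain ⟨w, hw, hwne⟩ := exists_other_neighbor hGc he
        obtain ⟨S, hSst, hSc, hv₁S, hv₂S⟩ := stab_avoid_two hG he hw hwne
        exact main S hSst hSc (Or.inr hv₁S) (Or.inr hv₂S)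
      · push_neg at hT2
        obtain ⟨S, hSst, hSc, hv₁S, -, -⟩ := stab_avoid (hG v₁ v₂ he) he
        exact main S hSst hSc (Or.inr hv₁S) (Or.inl hT2)
    · push_neg at hT1
      obtain ⟨S, hSst, hSc, hv₂S, -, -⟩ := stab_avoid (hG v₂ v₁ he.symm) he.symm
      exact main S hSst hSc (Or.inl hT1) (Or.inr hv₂S)

end Cases
end EVC


/-- If `G` and `H` are 2-connected α-critical graphs, `e = {v₁, v₂}`
an edge of `G`, `v` a vertex of `H`, and `N_H(v) = U₁ ⊔ U₂` a partition into two
nonempty disjoint sets, then the edge-vertex composition `c(G, e, H, v)` is an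
α-critical graph. -/
theorem evComp_isAlphaCritical {α β : Type*} [Fintype α] [Fintype β] [DecidableEq β]
    (G : SimpleGraph α) (v₁ v₂ : α) (H : SimpleGraph β) (v : β) (U₁ U₂ : Set β)
    (hGc : TwoConnected G) (hHc : TwoConnected H)
    (hG : IsAlphaCritical G) (hH : IsAlphaCritical H)
    (he : G.Adj v₁ v₂)
    (hU : U₁ ∪ U₂ = H.neighborSet v) (hdisj : Disjoint U₁ U₂)
    (hU₁ : U₁.Nonempty) (hU₂ : U₂.Nonempty) :
    IsAlphaCritical (evComp G v₁ v₂ H v U₁ U₂) := by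
  classical
  intro x y hxy
  have hαW := EVC.alphaW G v₁ v₂ H v U₁ U₂ hG hH he hU hU₁
  suffices hex : ∃ sW : Finset (α ⊕ {b : β // b ≠ v}),
      EVC.Stab ((evComp G v₁ v₂ H v U₁ U₂).deleteEdges {s(x, y)}) sW ∧
      sW.card = alphaNum G + alphaNum H + 1 by
    obtain ⟨sW, hst, hc⟩ := hex
    have h1 := EVC.card_le_alphaNum hst
    have h2 := EVC.alphaNum_deleteEdges_le (Γ := evComp G v₁ v₂ H v U₁ U₂) x y
    rw [hc] at h1
    omega
  rcases x with a | t <;> rcases y with b | t'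
  · obtain ⟨hab, hne⟩ := (EVC.evComp_adj_ll G v₁ v₂ H v U₁ U₂).1 hxy
    exact EVC.case_ll G v₁ v₂ H v U₁ U₂ hG hH he hU hdisj hU₁ hU₂ hab hne
  · exact EVC.case_lr G v₁ v₂ H v U₁ U₂ hG hH he hU hdisj
      ((EVC.evComp_adj_lr G v₁ v₂ H v U₁ U₂).1 hxy)
  · rw [Sym2.eq_swap]
    exact EVC.case_lr G v₁ v₂ H v U₁ U₂ hG hH he hU hdisj
      ((EVC.evComp_adj_lr G v₁ v₂ H v U₁ U₂).1 hxy.symm)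
  · exact EVC.case_rr G v₁ v₂ H v U₁ U₂ hGc hG hH he hU
      ((EVC.evComp_adj_rr G v₁ v₂ H v U₁ U₂).1 hxy)
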